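/- Fix ε > 0, ν positive, and a positive kernel K. For each i, the function φᵢ ↦ (1 - e^{-φᵢ})μᵢ + ε·Σⱼ(1 - e^{(φᵢ+ψⱼ-Cᵢⱼ)/ε})·1 achieves its maximum at φᵢ = (ε/(1+ε))·log(μᵢ / Σⱼ e^{-Cᵢⱼ/ε}e^{ψⱼ/ε}), i.e., the Sinkhorn update u_i = (μᵢ / Σⱼ e^{-Cᵢⱼ/ε} vⱼ)^{1/(1+ε)} with u = e^{φ/ε}, v = e^{ψ/ε} is the exact coordinate maximizer of the entropic dual. -/

import Mathlib

theorem sinkhorn_phi_update (I J : ℕ) (ε : ℝ) (hε : 0 < ε)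
    (C : Fin I → Fin J → ℝ) (μ : Fin I → ℝ) (hμ : ∀ i, 0 < μ i)
    (ψ : Fin J → ℝ) (hJ : 0 < J) (i : Fin I) :
    ∀ t : ℝ,
      (1 - Real.exp (-t)) * μ i +
          ε * ∑ j, (1 - Real.exp ((t + ψ j - C i j) / ε)) ≤
        (1 - Real.exp (-(ε / (1 + ε) *
              Real.log (μ i / ∑ j, Real.exp (-C i j / ε) * Real.exp (ψ j / ε))))) * μ i +
          ε * ∑ j, (1 - Real.exp
            ((ε / (1 + ε) *
                Real.log (μ i / ∑ j, Real.exp (-C i j / ε) * Real.exp (ψ j / ε)) +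
                ψ j - C i j) / ε)) := by
  intro t
  set S : ℝ := ∑ j, Real.exp (-C i j / ε) * Real.exp (ψ j / ε) with hS
  have hSpos : 0 < S := by
    apply Finset.sum_pos
    · intro j _; positivity
    · exact Finset.univ_nonempty_iff.mpr ⟨⟨0, hJ⟩⟩
  set L : ℝ := Real.log (μ i / S) with hL
  set t₀ : ℝ := ε / (1 + ε) * L with ht₀
  have hε1 : (0:ℝ) < 1 + ε := by linarith
  have hμS : μ i = Real.exp L * S := by
    rw [hL, Real.exp_log (div_pos (hμ i) hSpos)]
    field_simp
  have hkey : Real.exp (-t₀) * μ i = Real.exp (t₀ / ε) * S := by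
    rw [hμS, ← mul_assoc, ← Real.exp_add]
    congr 2
    rw [ht₀]
    field_simp
    ring
  have hterm : ∀ (s : ℝ) (j : Fin J), Real.exp ((s + ψ j - C i j) / ε)
      = Real.exp (s / ε) * (Real.exp (-C i j / ε) * Real.exp (ψ j / ε)) := by
    intro s j
    rw [← Real.exp_add, ← Real.exp_add]
    congr 1
    field_simp
    ring
  have hsum : ∀ s : ℝ, ∑ j, (1 - Real.exp ((s + ψ j - C i j) / ε))
      = (J : ℝ) - Real.exp (s / ε) * S := by
    intro s
    rw [Finset.sum_sub_distrib]
    simp_rw [hterm s]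
    rw [← Finset.mul_sum, ← hS, Finset.sum_const, Finset.card_univ, Fintype.card_fin,
      nsmul_eq_mul, mul_one]
  rw [hsum t, hsum t₀]
  set x : ℝ := t - t₀ with hx
  have h1 : Real.exp (-t₀) * (1 - x) ≤ Real.exp (-t) := by
    have h := Real.add_one_le_exp (-x)
    calc Real.exp (-t₀) * (1 - x) ≤ Real.exp (-t₀) * Real.exp (-x) := by
          exact mul_le_mul_of_nonneg_left (by linarith) (Real.exp_pos _).le
      _ = Real.exp (-t) := by rw [← Real.exp_add]; congr 1; rw [hx]; ring
  have h2 : Real.exp (t₀ / ε) * (1 + x / ε) ≤ Real.exp (t / ε) := by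
    have h := Real.add_one_le_exp (x / ε)
    calc Real.exp (t₀ / ε) * (1 + x / ε) ≤ Real.exp (t₀ / ε) * Real.exp (x / ε) := by
          exact mul_le_mul_of_nonneg_left (by linarith) (Real.exp_pos _).le
      _ = Real.exp (t / ε) := by
          rw [← Real.exp_add]; congr 1; rw [hx]; field_simp; ring
  have h1' : Real.exp (-t₀) * μ i * (1 - x) ≤ Real.exp (-t) * μ i := by
    calc Real.exp (-t₀) * μ i * (1 - x) = Real.exp (-t₀) * (1 - x) * μ i := by ring
      _ ≤ Real.exp (-t) * μ i := mul_le_mul_of_nonneg_right h1 (hμ i).le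
  have h2' : Real.exp (t₀ / ε) * S * (ε + x) ≤ ε * (Real.exp (t / ε) * S) := by
    have h := mul_le_mul_of_nonneg_right h2 (mul_pos hε hSpos).le
    calc Real.exp (t₀ / ε) * S * (ε + x)
        = Real.exp (t₀ / ε) * (1 + x / ε) * (ε * S) := by field_simp
      _ ≤ Real.exp (t / ε) * (ε * S) := h
      _ = ε * (Real.exp (t / ε) * S) := by ring
  have hcancel : x * (Real.exp (-t₀) * μ i) = x * (Real.exp (t₀ / ε) * S) := by rw [hkey]
  clear_value S L t₀ x
  nlinarith [h1', h2', hcancel]
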